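/- Let n be an integer with n ∉ {−1, 0, 1} such that 3n is not a perfect square. Then the Galois group of the splitting field of P_n(X) = X³ − 3(n+1)X + 2(n+1) over ℚ is isomorphic to S₃. -/

import Mathlib

open Polynomial

/-- `permCongr` as a `MulEquiv`. -/
def permMulEquiv {α β : Type*} (e : α ≃ β) : Equiv.Perm α ≃* Equiv.Perm β :=
  { e.permCongr with
    map_mul' := by
      intro f g
      ext x
      simp [Equiv.permCongr_apply] }

theorem stmt_13 (n : ℤ) (hn : n ≠ -1 ∧ n ≠ 0 ∧ n ≠ 1)
    (hsq : ¬ ∃ m : ℤ, 3 * n = m ^ 2) :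
    Nonempty
      ((X ^ 3 - C (3 * ((n : ℚ) + 1)) * X + C (2 * ((n : ℚ) + 1))).Gal ≃*
        Equiv.Perm (Fin 3)) := by
  classical
  obtain ⟨hn1, hn0, hn2⟩ := hn
  set p : ℚ[X] := X ^ 3 - C (3 * ((n : ℚ) + 1)) * X + C (2 * ((n : ℚ) + 1)) with hp
  have hdeg : p.natDegree = 3 := by unfold p; compute_degree!
  have hmonic : p.Monic := by unfold p; monicity!
  -- irreducibility
  have hirr : Irreducible p := by
    rw [irreducible_iff_roots_eq_zero_of_degree_le_three (by omega) (by omega)]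
    rw [Multiset.eq_zero_iff_forall_notMem]
    intro q hq
    rw [mem_roots hmonic.ne_zero] at hq
    have hq0 : q ^ 3 - 3 * ((n : ℚ) + 1) * q + 2 * ((n : ℚ) + 1) = 0 := by
      have := hq
      simp only [IsRoot, hp, eval_add, eval_sub, eval_mul, eval_pow, eval_X, eval_C] at this
      linarith [this]
    -- rational root is an integer
    set pZ : ℤ[X] := X ^ 3 - C (3 * (n + 1)) * X + C (2 * (n + 1)) with hpZ
    have hpZmonic : pZ.Monic := by unfold pZ; monicity!
    have haev : aeval q pZ = 0 := by
      rw [hpZ, map_add, map_sub, map_mul, map_pow, aeval_X, aeval_C, aeval_C]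
      simp only [algebraMap_int_eq, eq_intCast]
      push_cast
      linear_combination hq0
    obtain ⟨m, hm⟩ := isInteger_of_is_root_of_monic hpZmonic haev
    rw [← hm] at hq0
    have h : m ^ 3 - 3 * (n + 1) * m + 2 * (n + 1) = 0 := by
      have : ((m ^ 3 - 3 * (n + 1) * m + 2 * (n + 1) : ℤ) : ℚ) = 0 := by
        push_cast
        simp only [algebraMap_int_eq, eq_intCast] at hq0
        push_cast at hq0
        linear_combination hq0
      exact_mod_cast this
    have d1 : (3 * m - 2) ∣ m ^ 3 := ⟨n + 1, by linarith⟩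
    have d2 : (3 * m - 2) ∣ (27 * m ^ 3 - 8) := ⟨9 * m ^ 2 + 6 * m + 4, by ring⟩
    have d3 : (3 * m - 2) ∣ 8 := by
      have := dvd_sub (d1.mul_left 27) d2
      simpa using this
    have hb := Int.le_of_dvd (by norm_num) d3
    have hb2 := Int.le_of_dvd (by norm_num) d3.neg_left
    have hm1 : -2 ≤ m := by omega
    have hm2 : m ≤ 3 := by omega
    clear d1 d2 d3 hb hb2
    interval_cases m <;> norm_num at h <;> omega
  have hsep : p.Separable := hirr.separable
  set K := p.SplittingField with hK
  haveI : Fact ((p.map (algebraMap ℚ K)).Splits) := ⟨SplittingField.splits p⟩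
  -- root set has three elements
  have hcard : Fintype.card (p.rootSet K) = 3 := by
    exact (card_rootSet_eq_natDegree (K := K) hsep (SplittingField.splits p)).trans hdeg
  set a : K := algebraMap ℚ K ((n : ℚ) + 1) with ha
  have hroot : ∀ x ∈ p.rootSet K, x ^ 3 - 3 * a * x + 2 * a = 0 := by
    intro x hx
    have h0 := aeval_eq_zero_of_mem_rootSet hx
    simp only [hp, map_add, map_sub, map_mul, map_pow, map_ofNat, map_one, aeval_X,
      aeval_C] at h0
    rw [ha, map_add, map_one]
    linear_combination h0
  -- pick the three distinct roots
  let e : p.rootSet K ≃ Fin 3 := Fintype.equivFinOfCardEq hcard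
  set r : K := ((e.symm 0 : p.rootSet K) : K) with hrdef
  set s : K := ((e.symm 1 : p.rootSet K) : K) with hsdef
  set t : K := ((e.symm 2 : p.rootSet K) : K) with htdef
  have hne : ∀ i j : Fin 3, i ≠ j → ((e.symm i : p.rootSet K) : K) ≠ (e.symm j : p.rootSet K) := by
    intro i j hij hEq
    exact hij (e.symm.injective (Subtype.coe_injective hEq))
  have hrs : r ≠ s := hne 0 1 (by decide)
  have hst : s ≠ t := hne 1 2 (by decide)
  have hrt : r ≠ t := hne 0 2 (by decide)
  have hr : r ^ 3 - 3 * a * r + 2 * a = 0 := hroot r (e.symm 0).2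
  have hs : s ^ 3 - 3 * a * s + 2 * a = 0 := hroot s (e.symm 1).2
  have ht : t ^ 3 - 3 * a * t + 2 * a = 0 := hroot t (e.symm 2).2
  -- symmetric function relations
  have h1 : r ^ 2 + r * s + s ^ 2 = 3 * a := by
    have hfac : (r - s) * (r ^ 2 + r * s + s ^ 2 - 3 * a) = 0 := by linear_combination hr - hs
    rcases mul_eq_zero.mp hfac with h | h
    · exact absurd (sub_eq_zero.mp h) hrs
    · linear_combination h
  have h2 : s ^ 2 + s * t + t ^ 2 = 3 * a := by
    have hfac : (s - t) * (s ^ 2 + s * t + t ^ 2 - 3 * a) = 0 := by linear_combination hs - ht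
    rcases mul_eq_zero.mp hfac with h | h
    · exact absurd (sub_eq_zero.mp h) hst
    · linear_combination h
  have he1 : r + s + t = 0 := by
    have hfac : (r - t) * (r + s + t) = 0 := by linear_combination h1 - h2
    rcases mul_eq_zero.mp hfac with h | h
    · exact absurd (sub_eq_zero.mp h) hrt
    · exact h
  have htval : t = -(r + s) := by linear_combination he1
  have h3a : 3 * a = r ^ 2 + r * s + s ^ 2 := h1.symm
  have h2a : 2 * a = r ^ 2 * s + r * s ^ 2 := by
    linear_combination hr - r * h1
  -- the square root of the discriminant
  set δ : K := (r - s) * (r - t) * (s - t) with hδ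
  have hδ2 : δ ^ 2 = algebraMap ℚ K (108 * (n : ℚ) * ((n : ℚ) + 1) ^ 2) := by
    have key : δ ^ 2 = 4 * (3 * a) ^ 3 - 27 * (2 * a) ^ 2 := by
      rw [h3a, h2a, hδ, htval]; ring
    rw [key, show (108 * (n : ℚ) * ((n : ℚ) + 1) ^ 2 : ℚ)
        = 4 * (3 * ((n : ℚ) + 1)) ^ 3 - 27 * (2 * ((n : ℚ) + 1)) ^ 2 by ring]
    simp only [map_sub, map_mul, map_pow, map_ofNat, ha]
  have hδ0 : δ ≠ 0 := by
    simp only [hδ, mul_ne_zero_iff, sub_ne_zero]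
    exact ⟨⟨hrs, hrt⟩, hst⟩
  -- δ is not rational
  have hδnotmem : δ ∉ (algebraMap ℚ K).range := by
    rintro ⟨q, hq⟩
    have hq2 : q ^ 2 = 108 * (n : ℚ) * ((n : ℚ) + 1) ^ 2 := by
      apply (algebraMap ℚ K).injective
      rw [map_pow, hq, hδ2]
    have hn1' : ((n : ℚ) + 1) ≠ 0 := by
      intro h
      exact hn1 (by exact_mod_cast (by linarith [h] : (n : ℚ) = -1))
    set w : ℚ := q / (6 * ((n : ℚ) + 1)) with hw
    have hw2 : w ^ 2 = 3 * (n : ℚ) := by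
      rw [hw, div_pow, hq2, div_eq_iff (pow_ne_zero 2 (mul_ne_zero (by norm_num) hn1'))]
      ring
    have haevw : aeval w (X ^ 2 - C (3 * n) : ℤ[X]) = 0 := by
      rw [map_sub, map_pow, aeval_X, aeval_C]
      simp only [algebraMap_int_eq, eq_intCast]
      push_cast
      linear_combination hw2
    obtain ⟨m, hm⟩ := isInteger_of_is_root_of_monic (by monicity!) haevw
    apply hsq
    simp only [algebraMap_int_eq, eq_intCast] at hm
    rw [← hm] at hw2
    exact ⟨m, by exact_mod_cast hw2.symm⟩
  -- minpoly of δ has degree 2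
  have hδint : IsIntegral ℚ δ := IsIntegral.of_finite ℚ δ
  have hminδ : (minpoly ℚ δ).natDegree = 2 := by
    have hdvd : minpoly ℚ δ ∣ (X ^ 2 - C (108 * (n : ℚ) * ((n : ℚ) + 1) ^ 2)) := by
      apply minpoly.dvd
      simp only [map_sub, map_pow, aeval_X, aeval_C]
      rw [hδ2]
      ring
    have hg0 : (X ^ 2 - C (108 * (n : ℚ) * ((n : ℚ) + 1) ^ 2) : ℚ[X]) ≠ 0 := by
      intro h
      have := congrArg natDegree h
      rw [natDegree_X_pow_sub_C, natDegree_zero] at this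
      exact two_ne_zero this
    have hle : (minpoly ℚ δ).natDegree ≤ 2 := by
      have := natDegree_le_of_dvd hdvd hg0
      rwa [natDegree_X_pow_sub_C] at this
    have hpos : 0 < (minpoly ℚ δ).natDegree := minpoly.natDegree_pos hδint
    have hne1 : (minpoly ℚ δ).natDegree ≠ 1 := by
      intro h
      apply hδnotmem
      rw [← minpoly.degree_eq_one_iff]
      rw [degree_eq_natDegree (minpoly.ne_zero hδint), h]
      rfl
    omega
  haveI : FiniteDimensional ℚ K := (inferInstance : FiniteDimensional ℚ p.SplittingField)
  -- divisibility facts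
  have h2dvd : 2 ∣ Module.finrank ℚ K := by
    have hmul := Module.finrank_mul_finrank ℚ (IntermediateField.adjoin ℚ {δ} : IntermediateField ℚ K) K
    rw [IntermediateField.adjoin.finrank hδint, hminδ] at hmul
    exact ⟨_, hmul.symm⟩
  have h3dvd : 3 ∣ Fintype.card p.Gal := by
    have := Polynomial.Gal.prime_degree_dvd_card hirr (by rw [hdeg]; norm_num)
    rwa [hdeg, Nat.card_eq_fintype_card] at this
  have hcardGal : Fintype.card p.Gal = Module.finrank ℚ K := by
    rw [← Nat.card_eq_fintype_card]; exact Polynomial.Gal.card_of_separable hsep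
  have h2dvd' : 2 ∣ Fintype.card p.Gal := by rw [hcardGal]; exact h2dvd
  have h6dvd : 6 ∣ Fintype.card p.Gal := Nat.Coprime.mul_dvd_of_dvd_of_dvd (by norm_num) h2dvd' h3dvd
  -- Gal embeds into the permutations of the roots
  have hinj : Function.Injective (Polynomial.Gal.galActionHom p K) :=
    Polynomial.Gal.galActionHom_injective p K
  have hle6 : Fintype.card p.Gal ≤ 6 := by
    have := Fintype.card_le_of_injective _ hinj
    rwa [Fintype.card_perm, hcard] at this
  have hcard6 : Fintype.card p.Gal = 6 := by
    rcases h6dvd with ⟨k, hk⟩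
    have hpos : 0 < Fintype.card p.Gal := Fintype.card_pos
    omega
  have hbij : Function.Bijective (Polynomial.Gal.galActionHom p K) := by
    rw [Fintype.bijective_iff_injective_and_card]
    refine ⟨hinj, ?_⟩
    rw [hcard6, Fintype.card_perm, hcard]
    decide
  exact ⟨(MulEquiv.ofBijective _ hbij).trans (permMulEquiv (Fintype.equivFinOfCardEq hcard))⟩
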